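/- There exists a mad family 𝒜 on ω such that the filter F(𝒜) is not a strong P⁺-filter. -/

import Mathlib

open Set Filter

/-- The characteristic function of a set, viewing `𝒫(α)` inside the Cantor space `α → Bool`. -/
noncomputable def chi {α : Type*} (X : Set α) : α → Bool :=
  fun n => @decide (n ∈ X) (Classical.propDecidable _)

/-- A family of subsets of `α` viewed as a subset of the Cantor space `α → Bool`. -/
noncomputable def toCantor {α : Type*} (A : Set (Set α)) : Set (α → Bool) := chi '' A

/-- A family of subsets of `α` is meager if it is meager as a subset of the Cantor space. -/
def MeagerFamily {α : Type*} (A : Set (Set α)) : Prop := IsMeagre (toCantor A)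

/-- A family of subsets of `α` has the Baire property if, viewed in the Cantor space,
it differs from an open set by a meager set. -/
def HasBP {α : Type*} (A : Set (Set α)) : Prop :=
  ∃ U : Set (α → Bool), IsOpen U ∧ IsMeagre (symmDiff (toCantor A) U)

/-- `A` has the Baire property relative to `C ⊆ 2^α`: the trace of `A` on `C` differs from a
relatively open subset of `C` by a set meager in `C`. -/
def RelBP {α : Type*} (A : Set (Set α)) (C : Set (α → Bool)) : Prop :=
  ∃ O : Set C, IsOpen O ∧ IsMeagre (symmDiff (Subtype.val ⁻¹' (toCantor A)) O)

/-- Talagrand's strong Baire property: the filter has the Baire property relative to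
every closed subset of the Cantor space. -/
def StrongBP {α : Type*} (F : Filter α) : Prop :=
  ∀ C : Set (α → Bool), IsClosed C → RelBP F.sets C

/-- `F⁺`: the sets whose complement is not in `F`, i.e. the sets compatible with `F`. -/
def Fplus {α : Type*} (F : Filter α) : Set (Set α) := {X | Xᶜ ∉ F}

/-- `F` is completely meager if for every `X ∈ F⁺` the filter generated by `F ∪ {X}` is meager. -/
def CompletelyMeager {α : Type*} (F : Filter α) : Prop :=
  ∀ X ∈ Fplus F, MeagerFamily (F ⊓ 𝓟 X).sets

/-- `F` is weakly hereditarily meager if for every `f`, either some fiber `f⁻¹(i)` is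
compatible with `F`, or the image filter `f(F)` is meager. -/
def WeaklyHereditarilyMeager {α : Type*} (F : Filter α) : Prop :=
  ∀ f : α → ℕ, (∃ i : ℕ, f ⁻¹' {i} ∈ Fplus F) ∨ MeagerFamily (Filter.map f F).sets

/-- `F` is hereditarily meager if for every `f`, the image filter `f(F)` either contains
a finite set (is improper) or is meager. -/
def HereditarilyMeager {α : Type*} (F : Filter α) : Prop :=
  ∀ f : α → ℕ, (∃ Y ∈ Filter.map f F, Y.Finite) ∨ MeagerFamily (Filter.map f F).sets

/-- `F` is a P⁺-filter: every ⊆*-decreasing sequence from `F⁺` has a pseudo-intersection in `F⁺`. -/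
def PPlusFilter {α : Type*} (F : Filter α) : Prop :=
  ∀ X : ℕ → Set α, (∀ n, X n ∈ Fplus F) → (∀ n, (X (n + 1) \ X n).Finite) →
    ∃ Y ∈ Fplus F, ∀ n, (Y \ X n).Finite

/-- `F` is a strong P⁺-filter: for every sequence from `F⁺` there is `f : ω → ω` such that
every `Y ∈ F` meets `Xₙ ∩ [0, f(n))` for all but finitely many `n`. -/
def StrongPPlusFilter (F : Filter ℕ) : Prop :=
  ∀ X : ℕ → Set ℕ, (∀ n, X n ∈ Fplus F) →
    ∃ f : ℕ → ℕ, ∀ Y ∈ F, ∀ᶠ n in Filter.atTop, (Y ∩ X n ∩ Set.Iio (f n)).Nonempty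

/-- `F` is an Fσ filter: as a subset of Cantor space it is a countable union of closed sets. -/
def IsFsigmaFilter (F : Filter ℕ) : Prop :=
  ∃ C : ℕ → Set (ℕ → Bool), (∀ n, IsClosed (C n)) ∧ toCantor F.sets = ⋃ n, C n

/-- An almost disjoint family: an infinite family of infinite sets with pairwise finite
intersections. -/
def ADFamily (𝒜 : Set (Set ℕ)) : Prop :=
  𝒜.Infinite ∧ (∀ A ∈ 𝒜, A.Infinite) ∧
    ∀ A ∈ 𝒜, ∀ B ∈ 𝒜, A ≠ B → (A ∩ B).Finite

/-- A maximal almost disjoint family. -/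
def MadFamily (𝒜 : Set (Set ℕ)) : Prop :=
  ADFamily 𝒜 ∧ ∀ X : Set ℕ, X.Infinite → ∃ A ∈ 𝒜, (X ∩ A).Infinite

/-- `F(𝒜)`: the filter generated by the complements of members of `𝒜` and the cofinite sets. -/
def madFilter (𝒜 : Set (Set ℕ)) : Filter ℕ :=
  Filter.cofinite ⊓ ⨅ A ∈ 𝒜, 𝓟 Aᶜ

/-- `I(𝒜)`: the ideal generated by `𝒜`, i.e. sets covered by finitely many members of `𝒜`
together with a finite set. -/
def madIdeal (𝒜 : Set (Set ℕ)) : Set (Set ℕ) :=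
  {X | ∃ s : Finset (Set ℕ), ↑s ⊆ 𝒜 ∧ (X \ ⋃ A ∈ s, (A : Set ℕ)).Finite}

/-- The Fubini product `F ⊗ G` of two filters. -/
def tensor {α β : Type*} (F : Filter α) (G : Filter β) : Filter (α × β) where
  sets := {X | {n | {m | (n, m) ∈ X} ∈ G} ∈ F}
  univ_sets := by simp
  sets_of_superset := by
    intro X Y hX hXY
    simp only [Set.mem_setOf_eq] at *
    filter_upwards [hX] with n hn
    filter_upwards [hn] with m hm
    exact hXY hm
  inter_sets := by
    intro X Y hX hY
    simp only [Set.mem_setOf_eq] at *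
    filter_upwards [hX, hY] with n h1 h2
    filter_upwards [h1, h2] with m hm1 hm2
    exact ⟨hm1, hm2⟩

/-- A dominating family of functions. -/
def Dominating (D : Set (ℕ → ℕ)) : Prop :=
  ∀ g : ℕ → ℕ, ∃ f ∈ D, ∀ᶠ n in Filter.atTop, g n ≤ f n

/-- The dominating number `𝔡`. -/
noncomputable def frakD : Cardinal :=
  sInf {c : Cardinal | ∃ D : Set (ℕ → ℕ), Dominating D ∧ Cardinal.mk D = c}


namespace Mad12

/-- Code of the length-`k` prefix of `x`, via iterated pairing. -/
def enc (x : ℕ → ℕ) : ℕ → ℕ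
  | 0 => 0
  | k + 1 => Nat.pair (enc x k) (x k) + 1

theorem enc_eq {x y : ℕ → ℕ} : ∀ {k j : ℕ}, enc x k = enc y j →
    k = j ∧ ∀ i < k, x i = y i
  | 0, 0, _ => ⟨rfl, fun i hi => absurd hi (Nat.not_lt_zero i)⟩
  | 0, _ + 1, h => absurd h.symm (Nat.succ_ne_zero _)
  | _ + 1, 0, h => absurd h (Nat.succ_ne_zero _)
  | k + 1, j + 1, h => by
    have h' : Nat.pair (enc x k) (x k) = Nat.pair (enc y j) (y j) := Nat.succ_injective h
    have hp := congrArg Nat.unpair h'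
    simp only [Nat.unpair_pair, Prod.mk.injEq] at hp
    obtain ⟨h1, h2⟩ := hp
    obtain ⟨hk, hag⟩ := enc_eq (x := x) (y := y) h1
    subst hk
    refine ⟨rfl, fun i hi => ?_⟩
    rcases Nat.lt_succ_iff_lt_or_eq.mp hi with h | h
    · exact hag i h
    · subst h; exact h2

theorem enc_inj {x : ℕ → ℕ} : Function.Injective (enc x) :=
  fun _ _ h => (enc_eq h).1

/-- Columns of `ℕ ≃ ℕ × ℕ`. -/
def col (n : ℕ) : Set ℕ := {z | (Nat.unpair z).1 = n}

/-- Comb along the prefix-chain of `x`: in column `enc x k` take the initial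
segment of height `x k`. -/
def comb (x : ℕ → ℕ) : Set ℕ :=
  {z | ∃ k, (Nat.unpair z).1 = enc x k ∧ (Nat.unpair z).2 ≤ x k}

/-- Disjoint infinite blocks inside each column. -/
def blk (n r : ℕ) : Set ℕ :=
  {z | (Nat.unpair z).1 = n ∧ (Nat.unpair (Nat.unpair z).2).1 = r}

theorem colseg_finite (n B : ℕ) :
    {z : ℕ | (Nat.unpair z).1 = n ∧ (Nat.unpair z).2 ≤ B}.Finite := by
  apply Set.Finite.subset ((Set.finite_Iic B).image (Nat.pair n))
  rintro z ⟨h1, h2⟩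
  exact ⟨(Nat.unpair z).2, h2, by rw [← h1, Nat.pair_unpair]⟩

theorem comb_inter_col_finite (x : ℕ → ℕ) (n : ℕ) : (comb x ∩ col n).Finite := by
  by_cases h : ∃ k, enc x k = n
  · obtain ⟨k₀, hk₀⟩ := h
    apply (colseg_finite n (x k₀)).subset
    rintro z ⟨⟨k, hz1, hz2⟩, hzc⟩
    have he : enc x k = enc x k₀ := (hz1.symm.trans hzc).trans hk₀.symm
    have hk : k = k₀ := enc_inj he
    subst hk
    exact ⟨hzc, hz2⟩
  · apply Set.finite_empty.subset
    rintro z ⟨⟨k, hz1, _⟩, hzc⟩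
    exact absurd ⟨k, hz1.symm.trans hzc⟩ h

theorem comb_ad {x y : ℕ → ℕ} (hxy : x ≠ y) : (comb x ∩ comb y).Finite := by
  have hne : ∃ d, x d ≠ y d := Function.ne_iff.mp hxy
  set d := Nat.find hne with hdd
  have hd : x d ≠ y d := Nat.find_spec hne
  have hmin : ∀ i < d, x i = y i := fun i hi => not_not.mp (Nat.find_min hne hi)
  apply Set.Finite.subset
    (Set.Finite.biUnion (Set.finite_Iic d)
      (fun k _ => comb_inter_col_finite x (enc x k)))
  rintro z ⟨⟨k, h1, h2⟩, ⟨j, g1, g2⟩⟩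
  have he : enc x k = enc y j := h1.symm.trans g1
  obtain ⟨hkj, hag⟩ := enc_eq he
  have hkd : k ≤ d := by
    by_contra hgt
    exact hd (hag d (not_le.mp hgt))
  exact Set.mem_biUnion (Set.mem_Iic.mpr hkd) ⟨⟨k, h1, h2⟩, h1⟩

theorem comb_infinite (x : ℕ → ℕ) : (comb x).Infinite := by
  refine Set.infinite_of_injective_forall_mem
    (f := fun k => Nat.pair (enc x k) 0) ?_ ?_
  · intro a b hab
    have h := congrArg Nat.unpair hab
    simp only [Nat.unpair_pair, Prod.mk.injEq] at h
    exact enc_inj h.1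
  · intro k
    exact ⟨k, by simp [Nat.unpair_pair], by simp [Nat.unpair_pair]⟩

theorem blk_infinite (n r : ℕ) : (blk n r).Infinite := by
  refine Set.infinite_of_injective_forall_mem
    (f := fun s => Nat.pair n (Nat.pair r s)) ?_ ?_
  · intro a b hab
    have h := congrArg Nat.unpair hab
    simp only [Nat.unpair_pair, Prod.mk.injEq] at h
    have h2 := congrArg Nat.unpair h.2
    simp only [Nat.unpair_pair, Prod.mk.injEq] at h2
    exact h2.2
  · intro s
    exact ⟨by simp [Nat.unpair_pair], by simp [Nat.unpair_pair]⟩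

theorem blk_subset_col (n r : ℕ) : blk n r ⊆ col n := fun _ hz => hz.1

theorem mem_blk_pair (n r s : ℕ) : Nat.pair n (Nat.pair r s) ∈ blk n r := by
  constructor <;> simp [Nat.unpair_pair]

theorem blk_inj_params {n r n' r' : ℕ} (h : blk n r = blk n' r') : n = n' ∧ r = r' := by
  have hm : Nat.pair n (Nat.pair r 0) ∈ blk n' r' := h ▸ mem_blk_pair n r 0
  obtain ⟨h1, h2⟩ := hm
  simp only [Nat.unpair_pair] at h1 h2
  exact ⟨h1, h2⟩

theorem blk_ad {n r n' r' : ℕ} (h : ¬(n = n' ∧ r = r')) :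
    (blk n r ∩ blk n' r').Finite := by
  apply Set.finite_empty.subset
  rintro z ⟨⟨h1, h2⟩, ⟨h1', h2'⟩⟩
  exact h ⟨h1.symm.trans h1', h2.symm.trans h2'⟩

theorem comb_blk_ad (x : ℕ → ℕ) (n r : ℕ) : (comb x ∩ blk n r).Finite :=
  (comb_inter_col_finite x n).subset
    (Set.inter_subset_inter_right _ (blk_subset_col n r))

/-- The base a.d. family: all combs together with all blocks. -/
def base : Set (Set ℕ) := Set.range comb ∪ {S | ∃ n r, S = blk n r}

/-- `Good ℬ`: an a.d. family of infinite sets containing `base`. -/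
def Good (ℬ : Set (Set ℕ)) : Prop :=
  base ⊆ ℬ ∧ (∀ A ∈ ℬ, A.Infinite) ∧
    ∀ A ∈ ℬ, ∀ B ∈ ℬ, A ≠ B → (A ∩ B).Finite

theorem base_good : Good base := by
  refine ⟨subset_rfl, ?_, ?_⟩
  · rintro A (⟨x, rfl⟩ | ⟨n, r, rfl⟩)
    · exact comb_infinite x
    · exact blk_infinite n r
  · rintro A (⟨x, rfl⟩ | ⟨n, r, rfl⟩) B (⟨y, rfl⟩ | ⟨n', r', rfl⟩) hne
    · exact comb_ad (fun h => hne (by rw [h]))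
    · exact comb_blk_ad x n' r'
    · rw [Set.inter_comm]; exact comb_blk_ad y n r
    · exact blk_ad (fun ⟨h1, h2⟩ => hne (by rw [h1, h2]))

theorem exists_max : ∃ 𝒜, Good 𝒜 ∧ ∀ ℬ, Good ℬ → 𝒜 ⊆ ℬ → ℬ ⊆ 𝒜 := by
  have hch : ∀ c ⊆ {ℬ | Good ℬ}, IsChain (· ⊆ ·) c → c.Nonempty →
      ∃ ub ∈ {ℬ | Good ℬ}, ∀ s ∈ c, s ⊆ ub := by
    intro c hc hchain hne
    obtain ⟨ℬ₀, hℬ₀⟩ := hne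
    refine ⟨⋃₀ c, ⟨?_, ?_, ?_⟩, fun s hs => Set.subset_sUnion_of_mem hs⟩
    · exact ((hc hℬ₀).1).trans (Set.subset_sUnion_of_mem hℬ₀)
    · rintro A ⟨ℬ, hℬ, hA⟩
      exact (hc hℬ).2.1 A hA
    · rintro A ⟨ℬ₁, h1, hA⟩ B ⟨ℬ₂, h2, hB⟩ hne
      rcases eq_or_ne ℬ₁ ℬ₂ with h | h
      · subst h; exact (hc h1).2.2 A hA B hB hne
      · rcases hchain h1 h2 h with hh | hh
        · exact (hc h2).2.2 A (hh hA) B hB hne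
        · exact (hc h1).2.2 A hA B (hh hB) hne
  obtain ⟨m, _, hmax⟩ := zorn_subset_nonempty {ℬ | Good ℬ} hch base base_good
  exact ⟨m, hmax.1, fun ℬ hℬ hsub => hmax.2 hℬ hsub⟩

theorem mad_of_max {𝒜 : Set (Set ℕ)} (hG : Good 𝒜)
    (hmax : ∀ ℬ, Good ℬ → 𝒜 ⊆ ℬ → ℬ ⊆ 𝒜) : MadFamily 𝒜 := by
  obtain ⟨hbase, hinf, had⟩ := hG
  refine ⟨⟨?_, hinf, had⟩, ?_⟩
  · refine Set.infinite_of_injective_forall_mem (f := fun r => blk 0 r) ?_ ?_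
    · intro a b hab
      exact (blk_inj_params hab).2
    · intro r
      exact hbase (Or.inr ⟨0, r, rfl⟩)
  · intro Z hZ
    by_contra h
    push_neg at h
    have hfin : ∀ A ∈ 𝒜, (Z ∩ A).Finite := fun A hA => h A hA
    have hZmem : Z ∉ 𝒜 := by
      intro hmem
      have := hfin Z hmem
      rw [Set.inter_self] at this
      exact hZ this
    have hgood : Good (insert Z 𝒜) := by
      refine ⟨hbase.trans (Set.subset_insert _ _), ?_, ?_⟩
      · rintro A (rfl | hA)
        · exact hZ
        · exact hinf A hA
      · rintro A (rfl | hA) B (rfl | hB) hne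
        · exact absurd rfl hne
        · exact hfin B hB
        · rw [Set.inter_comm]; exact hfin A hA
        · exact had A hA B hB hne
    exact hZmem (hmax _ hgood (Set.subset_insert _ _) (Set.mem_insert _ _))

/-- Explicit filter with the same members as `madFilter 𝒜` (we only need `≤`). -/
def G (𝒜 : Set (Set ℕ)) : Filter ℕ where
  sets := {V | ∃ t : Finset (Set ℕ), ↑t ⊆ 𝒜 ∧
    ∃ F0 : Set ℕ, F0.Finite ∧ F0ᶜ ∩ ⋂ A ∈ t, (Aᶜ : Set ℕ) ⊆ V}
  univ_sets := ⟨∅, by simp, ∅, Set.finite_empty, by simp⟩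
  sets_of_superset := by
    rintro V W ⟨t, ht, F0, hF0, hsub⟩ hVW
    exact ⟨t, ht, F0, hF0, hsub.trans hVW⟩
  inter_sets := by
    classical
    rintro V W ⟨t, ht, F0, hF0, hsub⟩ ⟨t', ht', F0', hF0', hsub'⟩
    refine ⟨t ∪ t', ?_, F0 ∪ F0', hF0.union hF0', ?_⟩
    · rw [Finset.coe_union]
      exact Set.union_subset ht ht'
    · rintro z ⟨hz1, hz2⟩
      simp only [Set.mem_compl_iff, Set.mem_union, not_or] at hz1
      simp only [Set.mem_iInter, Set.mem_compl_iff, Finset.mem_union] at hz2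
      constructor
      · exact hsub ⟨hz1.1, by
          simp only [Set.mem_iInter, Set.mem_compl_iff]
          exact fun A hA => hz2 A (Or.inl hA)⟩
      · exact hsub' ⟨hz1.2, by
          simp only [Set.mem_iInter, Set.mem_compl_iff]
          exact fun A hA => hz2 A (Or.inr hA)⟩

theorem G_le (𝒜 : Set (Set ℕ)) : G 𝒜 ≤ madFilter 𝒜 := by
  rw [madFilter]
  refine le_inf ?_ (le_iInf fun A => le_iInf fun hA => ?_)
  · intro V hV
    exact ⟨∅, by simp, Vᶜ, hV, by simp⟩
  · rw [le_principal_iff]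
    exact ⟨{A}, by simp [hA], ∅, Set.finite_empty, by simp⟩

theorem mem_G_of_mem {𝒜 : Set (Set ℕ)} {V : Set ℕ} (h : V ∈ madFilter 𝒜) :
    V ∈ G 𝒜 := G_le 𝒜 h

theorem compl_mem_madFilter {𝒜 : Set (Set ℕ)} {A : Set ℕ} (hA : A ∈ 𝒜) :
    Aᶜ ∈ madFilter 𝒜 := by
  have hle : madFilter 𝒜 ≤ 𝓟 Aᶜ := by
    rw [madFilter]
    exact inf_le_right.trans (iInf_le_of_le A (iInf_le _ hA))
  exact hle (Filter.mem_principal_self _)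

theorem col_mem_Fplus {𝒜 : Set (Set ℕ)} (hG : Good 𝒜) (n : ℕ) :
    col n ∈ Fplus (madFilter 𝒜) := by
  intro hmem
  obtain ⟨t, ht, F0, hF0, hsub⟩ := mem_G_of_mem hmem
  -- the column is covered by F0 together with members of t
  have hcov : col n ⊆ F0 ∪ ⋃ A ∈ t, (A : Set ℕ) := by
    intro z hz
    by_contra hzc
    simp only [Set.mem_union, Set.mem_iUnion, not_or, not_exists] at hzc
    have : z ∈ F0ᶜ ∩ ⋂ A ∈ t, (Aᶜ : Set ℕ) := by
      refine ⟨hzc.1, ?_⟩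
      simp only [Set.mem_iInter, Set.mem_compl_iff]
      exact fun A hA => hzc.2 A hA
    exact hsub this hz
  -- pick a fresh block in column n
  have hpre : ({r | blk n r ∈ (↑t : Set (Set ℕ))}).Finite := by
    have : {r | blk n r ∈ (↑t : Set (Set ℕ))} = (fun r => blk n r) ⁻¹' ↑t := rfl
    rw [this]
    apply Set.Finite.preimage _ t.finite_toSet
    intro a _ b _ hab
    exact (blk_inj_params hab).2
  obtain ⟨r, hr⟩ := hpre.infinite_compl.nonempty
  simp only [Set.mem_compl_iff, Set.mem_setOf_eq] at hr
  -- blk n r is infinite but covered by finitely many a.d.-small pieces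
  have hsplit : blk n r ⊆ (blk n r ∩ F0) ∪ ⋃ A ∈ t, (blk n r ∩ A) := by
    intro z hz
    rcases hcov (blk_subset_col n r hz) with h | h
    · exact Or.inl ⟨hz, h⟩
    · simp only [Set.mem_iUnion] at h
      obtain ⟨A, hA, hzA⟩ := h
      exact Or.inr (Set.mem_biUnion hA ⟨hz, hzA⟩)
  have hfin : ((blk n r ∩ F0) ∪ ⋃ A ∈ t, (blk n r ∩ A)).Finite := by
    refine Set.Finite.union (hF0.subset Set.inter_subset_right) ?_
    apply Set.Finite.biUnion t.finite_toSet
    intro A hA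
    have hAmem : A ∈ 𝒜 := ht hA
    have hbmem : blk n r ∈ 𝒜 := hG.1 (Or.inr ⟨n, r, rfl⟩)
    have hne : blk n r ≠ A := fun h => hr (h ▸ hA)
    exact hG.2.2 (blk n r) hbmem A hAmem hne
  exact (blk_infinite n r) (hfin.subset hsplit)

end Mad12

/-- There is a mad family `𝒜` on `ω` such that `F(𝒜)` is not a strong P⁺-filter. -/
theorem stmt12 : ∃ 𝒜 : Set (Set ℕ), MadFamily 𝒜 ∧ ¬ StrongPPlusFilter (madFilter 𝒜) := by
  classical
  obtain ⟨𝒜, hGood, hmax⟩ := Mad12.exists_max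
  refine ⟨𝒜, Mad12.mad_of_max hGood hmax, ?_⟩
  intro hSP
  obtain ⟨f, hf⟩ := hSP Mad12.col (Mad12.col_mem_Fplus hGood)
  -- self-referential comb: heights are `f` of the column codes
  let E : ℕ → ℕ := fun k => Nat.rec 0 (fun _ e => Nat.pair e (f e) + 1) k
  let x : ℕ → ℕ := fun k => f (E k)
  have hE : ∀ k, Mad12.enc x k = E k := by
    intro k
    induction k with
    | zero => rfl
    | succ k ih =>
      show Nat.pair (Mad12.enc x k) (x k) + 1 = Nat.pair (E k) (f (E k)) + 1
      rw [ih]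
  have hcomb_mem : Mad12.comb x ∈ 𝒜 := hGood.1 (Or.inl ⟨x, rfl⟩)
  have hY := hf (Mad12.comb x)ᶜ (Mad12.compl_mem_madFilter hcomb_mem)
  rw [Filter.eventually_atTop] at hY
  obtain ⟨N, hN⟩ := hY
  have hrange : (Set.range (Mad12.enc x)).Infinite :=
    Set.infinite_range_of_injective Mad12.enc_inj
  have hbig : ∃ k, N ≤ Mad12.enc x k := by
    by_contra hcon
    push_neg at hcon
    apply hrange
    apply (Set.finite_Iio N).subset
    rintro _ ⟨k, rfl⟩
    exact hcon k
  obtain ⟨k, hk⟩ := hbig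
  obtain ⟨z, hz⟩ := hN (Mad12.enc x k) hk
  obtain ⟨⟨hz1, hz2⟩, hz3⟩ := hz
  apply hz1
  refine ⟨k, hz2, ?_⟩
  have hxk : x k = f (Mad12.enc x k) := by
    show f (E k) = f (Mad12.enc x k)
    rw [hE]
  have hlt : z < x k := by
    rw [hxk]
    exact hz3
  exact le_of_lt (lt_of_le_of_lt (Nat.unpair_right_le z) hlt)
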